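/- If x is obtained from y by a Pigou-Dalton progressive transfer, then for every convex weighting function f in the class F, the extended Gini social welfare satisfies W_f(x) ≥ W_f(y), where W_f(z) = ∑_{i=1}^n [f((n−i+1)/n) − f((n−i)/n)] z_i. -/

import Mathlib

/-- `x` is obtained from `y` by a Pigou-Dalton progressive transfer. -/
def PigouDalton {n : ℕ} (x y : Fin n → ℝ) : Prop :=
  Monotone x ∧ Monotone y ∧
  ∃ δ : ℝ, 0 < δ ∧ ∃ h k : Fin n, h < k ∧
    x h = y h + δ ∧ x k = y k - δ ∧ ∀ g : Fin n, g ≠ h → g ≠ k → x g = y g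

/-- Membership in the class F: `f : [0,1] → [0,1]` continuous, nondecreasing,
with `f 0 = 0` and `f 1 = 1`. -/
def MemF (f : ℝ → ℝ) : Prop :=
  ContinuousOn f (Set.Icc 0 1) ∧ MonotoneOn f (Set.Icc 0 1) ∧
  f 0 = 0 ∧ f 1 = 1 ∧ ∀ t ∈ Set.Icc (0 : ℝ) 1, f t ∈ Set.Icc (0 : ℝ) 1

/-- Extended Gini social welfare. Index `i : Fin n` corresponds to position
`i+1` in the paper, so weights are `f((n-i)/n) - f((n-i-1)/n)`. -/
noncomputable def W {n : ℕ} (f : ℝ → ℝ) (z : Fin n → ℝ) : ℝ :=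
  ∑ i : Fin n, (f (((n : ℝ) - (i : ℕ)) / n) - f (((n : ℝ) - (i : ℕ) - 1) / n)) * z i

lemma key_ineq {f : ℝ → ℝ} (hconv : ConvexOn ℝ (Set.Icc 0 1) f)
    {a b c d : ℝ} (ha : a ∈ Set.Icc (0:ℝ) 1) (hb : b ∈ Set.Icc (0:ℝ) 1)
    (hc : c ∈ Set.Icc (0:ℝ) 1) (hd : d ∈ Set.Icc (0:ℝ) 1)
    (hab : a < b) (hbc : b ≤ c) (hcd : c < d) (hlen : b - a = d - c) :
    f b - f a ≤ f d - f c := by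
  have h1 : (f b - f a) / (b - a) ≤ (f d - f a) / (d - a) :=
    hconv.secant_mono_aux2 ha hd hab (lt_of_le_of_lt hbc hcd)
  have h2 : (f d - f a) / (d - a) ≤ (f d - f c) / (d - c) :=
    hconv.secant_mono_aux3 ha hd (lt_of_lt_of_le hab hbc) hcd
  have h3 : (f b - f a) / (b - a) ≤ (f d - f c) / (d - c) := h1.trans h2
  have hba : 0 < b - a := by linarith
  rw [hlen] at h3
  have := (div_le_div_iff_of_pos_right (by linarith : (0:ℝ) < d - c)).mp h3
  linarith

theorem stmt2 {n : ℕ} (hn : 2 ≤ n) (x y : Fin n → ℝ)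
    (hPD : PigouDalton x y)
    (f : ℝ → ℝ) (hF : MemF f) (hconv : ConvexOn ℝ (Set.Icc 0 1) f) :
    W f x ≥ W f y := by
  obtain ⟨hmx, hmy, δ, hδ, h, k, hhk, hxh, hxk, hother⟩ := hPD
  have hnpos : (0:ℝ) < n := by positivity
  set w : Fin n → ℝ := fun i => f (((n : ℝ) - (i : ℕ)) / n) - f (((n : ℝ) - (i : ℕ) - 1) / n)
    with hw
  have hne : h ≠ k := ne_of_lt hhk
  -- membership facts
  have mem : ∀ i : Fin n, (((n : ℝ) - (i : ℕ)) / n) ∈ Set.Icc (0:ℝ) 1 ∧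
      (((n : ℝ) - (i : ℕ) - 1) / n) ∈ Set.Icc (0:ℝ) 1 := by
    intro i
    have hi : ((i : ℕ) : ℝ) < n := by exact_mod_cast i.isLt
    have hi' : ((i : ℕ) : ℝ) + 1 ≤ n := by
      have : (i : ℕ) + 1 ≤ n := i.isLt
      exact_mod_cast this
    constructor <;> constructor
    · apply div_nonneg _ hnpos.le; linarith
    · rw [div_le_one hnpos]; linarith [Nat.cast_nonneg (α := ℝ) (i : ℕ)]
    · apply div_nonneg _ hnpos.le; linarith
    · rw [div_le_one hnpos]; linarith [Nat.cast_nonneg (α := ℝ) (i : ℕ)]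
  -- w h ≥ w k
  have hwk : w k ≤ w h := by
    have hk : ((k : ℕ) : ℝ) ≤ n := by exact_mod_cast k.isLt.le
    have hhk' : ((h : ℕ) : ℝ) + 1 ≤ (k : ℕ) := by
      have : (h : ℕ) + 1 ≤ (k : ℕ) := hhk
      exact_mod_cast this
    exact key_ineq hconv (mem k).2 (mem k).1 (mem h).2 (mem h).1
      (by rw [div_lt_div_iff_of_pos_right hnpos]; linarith)
      (by rw [div_le_div_iff_of_pos_right hnpos]; linarith)
      (by rw [div_lt_div_iff_of_pos_right hnpos]; linarith)
      (by field_simp; ring)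
  have hdiff : ∀ i : Fin n, x i - y i =
      (if i = h then δ else 0) + (if i = k then -δ else 0) := by
    intro i
    by_cases hih : i = h
    · subst hih; simp [hne, hxh]
    · by_cases hik : i = k
      · subst hik; simp [Ne.symm hne, hxk]
      · simp [hih, hik, hother i hih hik]
  have hsum : W f x - W f y = w h * δ + w k * (-δ) := by
    rw [W, W, ← Finset.sum_sub_distrib]
    have : ∀ i : Fin n, w i * x i - w i * y i
        = w i * (if i = h then δ else 0) + w i * (if i = k then -δ else 0) := by
      intro i
      rw [← mul_sub, hdiff i, mul_add]
    simp only [hw] at this ⊢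
    rw [Finset.sum_congr rfl (fun i _ => this i), Finset.sum_add_distrib]
    simp [Finset.sum_ite_eq', mul_ite]
  have : 0 ≤ W f x - W f y := by
    rw [hsum]; nlinarith
  linarith
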